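/- Let SG be the Sierpiński gasket generated from an equilateral triangle of side 1, and for k ≥ 1 let Δ_k be the 3^{k-1} open equilateral triangles of side 2^{-k} removed at step k. Let g = 1/(4√3). Define β₁(SG;t) = 3/2 + Σ_{k : g·2^{-k+1} > t} 3^{k-1} · 3(2^{-k-1} − √3 t) (summing contributions of visible removed triangles). Then, with D = log₂3, there exist constants 0 < c₁ ≤ c₂ < ∞ such that c₁ ≤ t^{D−1} β₁(SG;t) ≤ c₂ for all sufficiently small t > 0; explicitly c₁ = (15/16) g^{D−1} works as lower bound and c₂ = (3/2) g^{1−D} as t^{1−D} upper bound constant. In particular, inf{q : limsup_{t→0⁺} t^{q−1} β₁(SG;t) = 0} = log₂3. -/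

import Mathlib

open Filter Set Topology

noncomputable section

/-- The inradius `g = 1/(4√3)` of the first removed triangle of the Sierpiński
gasket. -/
def gSG : ℝ := 1 / (4 * Real.sqrt 3)

/-- The first basic function of the Sierpiński gasket: `β₁(SG;t)` is `3/2` plus the
sum over all levels `k ≥ 1` with `g·2^{-k+1} > t` of the contributions
`3^{k-1}·3(2^{-k-1} − √3 t)` of the `3^{k-1}` removed triangles of side `2^{-k}`. -/
def betaSG (t : ℝ) : ℝ :=
  3 / 2 + ∑' k : ℕ,
    if 1 ≤ k ∧ t < gSG * (2:ℝ) ^ (1 - (k : ℝ)) then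
      (3:ℝ) ^ ((k : ℝ) - 1) * 3 * ((2:ℝ) ^ (-(k : ℝ) - 1) - Real.sqrt 3 * t)
    else 0

lemma sqrt3_pos : (0:ℝ) < Real.sqrt 3 := Real.sqrt_pos.mpr (by norm_num)

lemma gSG_pos : 0 < gSG := by
  unfold gSG; positivity

lemma sqrt3_mul_gSG : Real.sqrt 3 * gSG = 1/4 := by
  unfold gSG
  rw [mul_one_div, div_eq_iff (by positivity)]
  nlinarith [Real.sq_sqrt (by norm_num : (0:ℝ) ≤ 3), sqrt3_pos]

lemma gSG_le : gSG ≤ 1/4 := by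
  unfold gSG
  rw [div_le_div_iff₀ (by positivity) (by norm_num)]
  nlinarith [Real.one_le_sqrt.mpr (by norm_num : (1:ℝ) ≤ 3), sqrt3_pos]

-- numeric facts about logs
lemma log32_lb : (0.40256:ℝ) ≤ Real.log (3/2) := by
  have hu0 : (0:ℝ) < ((2:ℝ)/3) ^ ((32:ℝ)⁻¹) := Real.rpow_pos_of_pos (by norm_num) _
  have hpow : (((2:ℝ)/3) ^ ((32:ℝ)⁻¹)) ^ (32:ℕ) = 2/3 := by
    rw [← Real.rpow_natCast (((2:ℝ)/3) ^ ((32:ℝ)⁻¹)) 32, ← Real.rpow_mul (by norm_num)]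
    norm_num
  have huq : ((2:ℝ)/3) ^ ((32:ℝ)⁻¹) ≤ 0.98742 := by
    apply le_of_pow_le_pow_left₀ (n := 32) (by norm_num) (by norm_num)
    rw [hpow]; norm_num
  have hlog : Real.log (((2:ℝ)/3) ^ ((32:ℝ)⁻¹)) = (32:ℝ)⁻¹ * Real.log (2/3) :=
    Real.log_rpow (by norm_num) _
  have hle : Real.log (((2:ℝ)/3) ^ ((32:ℝ)⁻¹)) ≤ 0.98742 - 1 := by
    calc Real.log (((2:ℝ)/3) ^ ((32:ℝ)⁻¹)) ≤ ((2:ℝ)/3) ^ ((32:ℝ)⁻¹) - 1 :=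
          Real.log_le_sub_one_of_pos hu0
      _ ≤ 0.98742 - 1 := by linarith
  have h23 : Real.log ((3:ℝ)/2) = - Real.log (2/3) := by
    rw [show ((3:ℝ)/2) = ((2:ℝ)/3)⁻¹ by norm_num, Real.log_inv]
  rw [hlog] at hle
  rw [h23]
  nlinarith

lemma log54_ub : Real.log (5/4) ≤ (0.2296:ℝ) := by
  have hu0 : (0:ℝ) < ((5:ℝ)/4) ^ ((4:ℝ)⁻¹) := Real.rpow_pos_of_pos (by norm_num) _
  have hpow : (((5:ℝ)/4) ^ ((4:ℝ)⁻¹)) ^ (4:ℕ) = 5/4 := by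
    rw [← Real.rpow_natCast (((5:ℝ)/4) ^ ((4:ℝ)⁻¹)) 4, ← Real.rpow_mul (by norm_num)]
    norm_num
  have huq : ((5:ℝ)/4) ^ ((4:ℝ)⁻¹) ≤ 1.0574 := by
    apply le_of_pow_le_pow_left₀ (n := 4) (by norm_num) (by norm_num)
    rw [hpow]; norm_num
  have hlog : Real.log (((5:ℝ)/4) ^ ((4:ℝ)⁻¹)) = (4:ℝ)⁻¹ * Real.log (5/4) :=
    Real.log_rpow (by norm_num) _
  have hle : Real.log (((5:ℝ)/4) ^ ((4:ℝ)⁻¹)) ≤ 1.0574 - 1 := by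
    calc Real.log (((5:ℝ)/4) ^ ((4:ℝ)⁻¹)) ≤ ((5:ℝ)/4) ^ ((4:ℝ)⁻¹) - 1 :=
          Real.log_le_sub_one_of_pos hu0
      _ ≤ 1.0574 - 1 := by linarith
  rw [hlog] at hle
  linarith

lemma D1_eq : Real.logb 2 3 - 1 = Real.log (3/2) / Real.log 2 := by
  rw [Real.logb, Real.log_div (by norm_num) (by norm_num)]
  field_simp

lemma D1_pos : 0 < Real.logb 2 3 - 1 := by
  rw [D1_eq]
  exact div_pos (Real.log_pos (by norm_num)) (Real.log_pos (by norm_num))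

-- (3/2)^(D-1) ≥ 5/4
lemma h54 : (5/4:ℝ) ≤ (3/2:ℝ) ^ (Real.logb 2 3 - 1) := by
  have h2 : (0:ℝ) < Real.log 2 := Real.log_pos (by norm_num)
  rw [Real.le_rpow_iff_log_le (by norm_num) (by norm_num), D1_eq]
  have hL := log32_lb
  have h54 := log54_ub
  have hl2 : Real.log 2 < 0.6931471808 := Real.log_two_lt_d9
  rw [div_mul_eq_mul_div, le_div_iff₀ h2]
  nlinarith

-- 2(D-1) ≥ 1
lemma D1_half : (1:ℝ) ≤ 2 * (Real.logb 2 3 - 1) := by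
  have h2 : (0:ℝ) < Real.log 2 := Real.log_pos (by norm_num)
  rw [D1_eq]
  rw [mul_div_assoc', le_div_iff₀ h2]
  have hL := log32_lb
  have hl2 : Real.log 2 < 0.6931471808 := Real.log_two_lt_d9
  linarith

lemma sum_formula (s : ℝ) (n : ℕ) :
    ∑ k ∈ Finset.Icc 1 n, (3:ℝ)^k * (((2:ℝ)^(k+1))⁻¹ - s)
      = (3/2)^(n+1) - 3/2 - s * ((3:ℝ)^(n+1) - 3)/2 := by
  induction n with
  | zero => simp
  | succ n ih =>
    rw [Finset.sum_Icc_succ_top (by omega : 1 ≤ n + 1), ih]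
    have h2 : ((2:ℝ)^(n+1)) ≠ 0 := by positivity
    have h2' : ((2:ℝ)^(n+2)) ≠ 0 := by positivity
    field_simp [div_pow]
    have hx : ((3:ℝ)/2)^n * 2^n = 3^n := by rw [div_pow, div_mul_cancel₀ _ (by positivity)]
    linear_combination (-6) * hx

lemma rpow_nat_inv (k : ℕ) : (2:ℝ) ^ (1 - (k:ℝ)) = 2 / 2^k := by
  rw [Real.rpow_sub (by norm_num), Real.rpow_one, Real.rpow_natCast]

lemma betaSG_formula (n : ℕ) (hn : 1 ≤ n) (t : ℝ) (h1 : gSG/2^n ≤ t) (h2 : t < 2*gSG/2^n) :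
    betaSG t = (3/2)^(n+1) - Real.sqrt 3 * t * ((3:ℝ)^(n+1) - 3)/2 := by
  have ht0 : 0 < t := lt_of_lt_of_le (div_pos gSG_pos (by positivity)) h1
  unfold betaSG
  have hterm : ∀ k : ℕ,
      (if 1 ≤ k ∧ t < gSG * (2:ℝ) ^ (1 - (k : ℝ)) then
        (3:ℝ) ^ ((k : ℝ) - 1) * 3 * ((2:ℝ) ^ (-(k : ℝ) - 1) - Real.sqrt 3 * t)
      else 0)
      = (if k ∈ Finset.Icc 1 n then (3:ℝ)^k * (((2:ℝ)^(k+1))⁻¹ - Real.sqrt 3 * t) else 0) := by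
    intro k
    have hcond : (1 ≤ k ∧ t < gSG * (2:ℝ) ^ (1 - (k : ℝ))) ↔ k ∈ Finset.Icc 1 n := by
      rw [Finset.mem_Icc, rpow_nat_inv]
      constructor
      · rintro ⟨hk1, hkt⟩
        refine ⟨hk1, ?_⟩
        by_contra h
        push_neg at h
        have : gSG * (2 / 2^k) ≤ gSG / 2^n := by
          rw [mul_div_assoc', div_le_div_iff₀ (by positivity) (by positivity)]
          have : (2:ℝ)^(n+1) ≤ 2^k := pow_le_pow_right₀ (by norm_num) (by omega)
          calc gSG * 2 * 2^n = gSG * 2^(n+1) := by ring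
            _ ≤ gSG * 2^k := by nlinarith [gSG_pos]
          
        linarith
      · rintro ⟨hk1, hkn⟩
        refine ⟨hk1, ?_⟩
        have : 2 * gSG / 2^n ≤ gSG * (2/2^k) := by
          rw [mul_div_assoc', div_le_div_iff₀ (by positivity) (by positivity)]
          have : (2:ℝ)^k ≤ 2^n := pow_le_pow_right₀ (by norm_num) hkn
          nlinarith [gSG_pos]
        linarith
    rw [if_congr hcond rfl rfl]
    by_cases hk : k ∈ Finset.Icc 1 n
    · rw [if_pos hk, if_pos hk]
      have hk1 : 1 ≤ k := (Finset.mem_Icc.mp hk).1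
      have e3 : (3:ℝ) ^ ((k : ℝ) - 1) * 3 = 3^k := by
        have h' : (3:ℝ)^((k:ℝ)-1) = 3^(k:ℝ) / 3 := by
          rw [Real.rpow_sub (by norm_num), Real.rpow_one]
        rw [h', Real.rpow_natCast]
        field_simp
      have e2 : (2:ℝ) ^ (-(k : ℝ) - 1) = ((2:ℝ)^(k+1))⁻¹ := by
        rw [show (-(k:ℝ) - 1) = -((k:ℝ)+1) by ring, Real.rpow_neg (by norm_num)]
        norm_num
        rw [show ((k:ℝ)+1) = ((k+1 : ℕ):ℝ) by push_cast; ring, Real.rpow_natCast]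
      rw [e3, e2]
    · rw [if_neg hk, if_neg hk]
  rw [tsum_congr hterm, tsum_eq_sum (s := Finset.Icc 1 n) (by intro k hk; rw [if_neg hk])]
  have : ∑ k ∈ Finset.Icc 1 n, (if k ∈ Finset.Icc 1 n then (3:ℝ)^k * (((2:ℝ)^(k+1))⁻¹ - Real.sqrt 3 * t) else 0)
      = ∑ k ∈ Finset.Icc 1 n, (3:ℝ)^k * (((2:ℝ)^(k+1))⁻¹ - Real.sqrt 3 * t) :=
    Finset.sum_congr rfl (fun k hk => if_pos hk)
  rw [this, sum_formula]
  ring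

lemma hD2 : (2:ℝ) ^ (Real.logb 2 3 - 1) = 3/2 := by
  rw [Real.rpow_sub (by norm_num), Real.rpow_logb (by norm_num) (by norm_num) (by norm_num),
    Real.rpow_one]

lemma rpow_base (n : ℕ) :
    ((gSG/2^n) : ℝ) ^ (Real.logb 2 3 - 1) = gSG ^ (Real.logb 2 3 - 1) / (3/2)^n := by
  rw [Real.div_rpow gSG_pos.le (by positivity)]
  congr 1
  rw [← Real.rpow_natCast (2:ℝ) n, ← Real.rpow_mul (by norm_num), mul_comm,
    Real.rpow_mul (by norm_num), hD2, Real.rpow_natCast]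

lemma aux1 (x p c : ℝ) (hp : p ≠ 0) : (x/p) * (c*p) = c*x := by
  field_simp

lemma aux2 (x p : ℝ) (hp : p ≠ 0) : ((3/2)*(x/p))*(p*(3/2)) = (9/4)*x := by
  field_simp; ring

lemma aux3 (x p c d : ℝ) (hp : p ≠ 0) : (c*(x/p))*(d*p) = (c*d)*x := by
  field_simp

lemma key (t : ℝ) (ht : t ∈ Set.Ioo 0 gSG) :
    (15 / 16) * gSG ^ (Real.logb 2 3 - 1) ≤ t ^ (Real.logb 2 3 - 1) * betaSG t ∧
      t ^ (Real.logb 2 3 - 1) * betaSG t ≤ (3 / 2) * gSG ^ (1 - Real.logb 2 3) := by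
  obtain ⟨ht0, htg⟩ := ht
  set D := Real.logb 2 3 with hDdef
  -- find n
  obtain ⟨m, hm1, hm2⟩ := exists_mem_Ico_zpow (x := t/gSG) (y := 2)
    (div_pos ht0 gSG_pos) (by norm_num)
  have htg1 : t / gSG < 1 := (div_lt_one gSG_pos).mpr htg
  have hmneg : m < 0 := by
    by_contra h
    push_neg at h
    have : (1:ℝ) ≤ 2 ^ m := one_le_zpow₀ (by norm_num) h
    linarith
  set n : ℕ := (-m).toNat with hndef
  have hn1 : 1 ≤ n := by omega
  have hmn : m = -(n:ℤ) := by omega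
  have hzp : (2:ℝ) ^ m = ((2:ℝ)^n)⁻¹ := by
    rw [hmn, zpow_neg, zpow_natCast]
  have h1 : gSG/2^n ≤ t := by
    rw [hzp, inv_eq_one_div, div_le_div_iff₀ (by positivity) gSG_pos] at hm1
    rw [div_le_iff₀ (by positivity)]
    linarith
  have h2 : t < 2*gSG/2^n := by
    have e : (2:ℝ)^(m+1) = 2/(2^n) := by
      rw [zpow_add₀ (by norm_num : (2:ℝ) ≠ 0), hzp, zpow_one]; ring
    rw [e, div_lt_div_iff₀ gSG_pos (by positivity)] at hm2
    rw [lt_div_iff₀ (by positivity)]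
    linarith
  -- formula
  have hform := betaSG_formula n hn1 t h1 h2
  have h2n : (0:ℝ) < 2^n := by positivity
  have h3n : (0:ℝ) < 3^n := by positivity
  have h32n : ((3:ℝ)/2)^n = 3^n/2^n := div_pow 3 2 n
  have hs0 : 0 ≤ Real.sqrt 3 * t := by positivity
  have hcoef : (0:ℝ) ≤ ((3:ℝ)^(n+1) - 3)/2 := by
    have : (3:ℝ) ≤ 3^(n+1) := by
      calc (3:ℝ) = 3^1 := by norm_num
        _ ≤ 3^(n+1) := pow_le_pow_right₀ (by norm_num) (by omega)
    linarith
  have hDpos := D1_pos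
  -- lower bound for beta on whole interval
  have hst : Real.sqrt 3 * t ≤ 2⁻¹/2^n := by
    calc Real.sqrt 3 * t ≤ Real.sqrt 3 * (2*gSG/2^n) := by
          apply mul_le_mul_of_nonneg_left h2.le sqrt3_pos.le
      _ = 2 * (Real.sqrt 3 * gSG) / 2^n := by ring
      _ = 2⁻¹/2^n := by rw [sqrt3_mul_gSG]; ring
  have hc2 : ((3:ℝ)^(n+1) - 3)/2 ≤ 3*3^n/2 := by
    rw [pow_succ]
    nlinarith
  have hblb : (3/4:ℝ)*(3/2)^n ≤ betaSG t := by
    rw [hform]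
    have hsc : Real.sqrt 3 * t * ((3:ℝ)^(n+1) - 3)/2 ≤ (2⁻¹/2^n)*(3*3^n/2) := by
      rw [mul_div_assoc]
      exact mul_le_mul hst hc2 hcoef (by positivity)
    have he : (2⁻¹/2^n)*(3*(3:ℝ)^n/2) = (3/4)*((3:ℝ)/2)^n := by
      rw [h32n]; field_simp; ring
    have he2 : ((3:ℝ)/2)^(n+1) = (3/2)*(3/2)^n := by rw [pow_succ]; ring
    rw [he] at hsc
    linarith [hsc, he2.ge, he2.le]
  have hbpos : (0:ℝ) < betaSG t := lt_of_lt_of_le (by positivity) hblb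
  -- upper bound
  have hbub : betaSG t ≤ (3/2)^(n+1) := by
    rw [hform]
    nlinarith [mul_nonneg (mul_nonneg hs0 hcoef) (by norm_num : (0:ℝ) ≤ 1), mul_nonneg hs0 hcoef]
  have htDu : t^(D-1) ≤ (3/2) * (gSG^(D-1)/(3/2)^n) := by
    calc t^(D-1) ≤ (2*(gSG/2^n))^(D-1) := by
          apply Real.rpow_le_rpow ht0.le _ hDpos.le
          rw [mul_div_assoc] at h2; exact h2.le
      _ = 2^(D-1) * (gSG/2^n)^(D-1) :=
          Real.mul_rpow (by norm_num) (div_nonneg gSG_pos.le (by positivity))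
      _ = (3/2) * (gSG^(D-1)/(3/2)^n) := by rw [hD2, rpow_base]
  have hub : t^(D-1) * betaSG t ≤ (3/2) * gSG^(1-D) := by
    have step1 : t^(D-1) * betaSG t ≤ ((3/2) * (gSG^(D-1)/(3/2)^n)) * (3/2)^(n+1) :=
      mul_le_mul htDu hbub hbpos.le
        (mul_nonneg (by norm_num) (div_nonneg (Real.rpow_pos_of_pos gSG_pos _).le (by positivity)))
    have step2 : ((3/2) * (gSG^(D-1)/((3:ℝ)/2)^n)) * ((3:ℝ)/2)^(n+1) = (9/4) * gSG^(D-1) := by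
      rw [pow_succ]
      exact aux2 _ _ (by positivity)
    rw [step2] at step1
    refine le_trans step1 ?_
    -- (9/4) g^(D-1) ≤ (3/2) g^(1-D)
    have hx : (0:ℝ) < gSG^(D-1) := Real.rpow_pos_of_pos gSG_pos _
    have hinv : gSG^(1-D) = (gSG^(D-1))⁻¹ := by
      rw [show (1 - D) = -(D-1) by ring, Real.rpow_neg gSG_pos.le]
    have hsq : gSG^(D-1) * gSG^(D-1) ≤ 2/3 := by
      have e : gSG^(D-1) * gSG^(D-1) = gSG^(2*(D-1)) := by
        rw [← Real.rpow_add gSG_pos]; ring_nf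
      rw [e]
      calc gSG^(2*(D-1)) ≤ gSG^(1:ℝ) :=
            Real.rpow_le_rpow_of_exponent_ge gSG_pos (le_trans gSG_le (by norm_num)) D1_half
        _ = gSG := Real.rpow_one _
        _ ≤ 2/3 := le_trans gSG_le (by norm_num)
    rw [hinv, ← div_eq_mul_inv, le_div_iff₀ hx]
    nlinarith
  refine ⟨?_, hub⟩
  by_cases hcase : t ≤ (3/2)*gSG/2^n
  · -- lower part of interval
    have hstA : Real.sqrt 3 * t ≤ (3/8)/2^n := by
      calc Real.sqrt 3 * t ≤ Real.sqrt 3 * ((3/2)*gSG/2^n) :=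
            mul_le_mul_of_nonneg_left hcase sqrt3_pos.le
        _ = (3/2) * (Real.sqrt 3 * gSG) / 2^n := by ring
        _ = (3/8)/2^n := by rw [sqrt3_mul_gSG]; ring
    have hbA : (15/16:ℝ)*(3/2)^n ≤ betaSG t := by
      rw [hform]
      have hsc : Real.sqrt 3 * t * ((3:ℝ)^(n+1) - 3)/2 ≤ ((3/8)/2^n)*(3*3^n/2) := by
        rw [mul_div_assoc]
        exact mul_le_mul hstA hc2 hcoef (by positivity)
      have he : ((3:ℝ)/8/2^n)*(3*(3:ℝ)^n/2) = (9/16)*((3:ℝ)/2)^n := by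
        rw [h32n]; field_simp; ring
      have he2 : ((3:ℝ)/2)^(n+1) = (3/2)*(3/2)^n := by rw [pow_succ]; ring
      rw [he] at hsc
      linarith [he2.ge, he2.le]
    have htD : gSG^(D-1)/(3/2)^n ≤ t^(D-1) := by
      rw [← rpow_base]
      exact Real.rpow_le_rpow (div_nonneg gSG_pos.le (by positivity)) h1 hDpos.le
    calc (15/16) * gSG^(D-1) = (gSG^(D-1)/((3:ℝ)/2)^n) * ((15/16)*(3/2)^n) :=
          (aux1 _ _ _ (by positivity)).symm
      _ ≤ t^(D-1) * betaSG t :=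
          mul_le_mul htD hbA (by positivity) (Real.rpow_nonneg ht0.le _)
  · push_neg at hcase
    have htD : (5/4) * (gSG^(D-1)/(3/2)^n) ≤ t^(D-1) := by
      calc (5/4) * (gSG^(D-1)/((3:ℝ)/2)^n)
          ≤ (3/2)^(D-1) * (gSG^(D-1)/((3:ℝ)/2)^n) := by
            apply mul_le_mul_of_nonneg_right h54
              (div_nonneg (Real.rpow_pos_of_pos gSG_pos _).le (by positivity))
        _ = ((3/2)*(gSG/2^n))^(D-1) := by
            rw [Real.mul_rpow (by norm_num) (div_nonneg gSG_pos.le (by positivity)), rpow_base]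
        _ ≤ t^(D-1) := by
            apply Real.rpow_le_rpow
              (mul_nonneg (by norm_num) (div_nonneg gSG_pos.le (by positivity))) _ hDpos.le
            rw [mul_div_assoc] at hcase; exact hcase.le
    calc (15/16) * gSG^(D-1) = ((5/4) * (gSG^(D-1)/((3:ℝ)/2)^n)) * ((3/4)*(3/2)^n) := by
          rw [aux3 _ _ _ _ (by positivity)]; norm_num
      _ ≤ t^(D-1) * betaSG t :=
          mul_le_mul htD hblb (by positivity) (Real.rpow_nonneg ht0.le _)

/-- with `D = log₂ 3`, for all sufficiently small `t > 0` one has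
`(15/16)·g^{D−1} ≤ t^{D−1} β₁(SG;t) ≤ (3/2)·g^{1−D}`; in particular the first basic
scaling exponent `inf{q : limsup_{t→0⁺} t^{q−1} β₁(SG;t) = 0}` equals `log₂ 3`. -/
theorem sierpinski_gasket_beta_one :
    (∃ t₀ > (0:ℝ), ∀ t ∈ Set.Ioo (0:ℝ) t₀,
      (15 / 16) * gSG ^ (Real.logb 2 3 - 1) ≤ t ^ (Real.logb 2 3 - 1) * betaSG t ∧
      t ^ (Real.logb 2 3 - 1) * betaSG t ≤ (3 / 2) * gSG ^ (1 - Real.logb 2 3)) ∧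
    sInf {q : ℝ |
        Filter.limsup (fun t : ℝ => ((t ^ (q - 1) * betaSG t : ℝ) : EReal)) (𝓝[>] 0)
          = (0 : EReal)} = Real.logb 2 3 := by
  have hc1pos : (0:ℝ) < (15/16) * gSG ^ (Real.logb 2 3 - 1) :=
    mul_pos (by norm_num) (Real.rpow_pos_of_pos gSG_pos _)
  constructor
  · exact ⟨gSG, gSG_pos, fun t ht => key t ht⟩
  · have hS : {q : ℝ |
        Filter.limsup (fun t : ℝ => ((t ^ (q - 1) * betaSG t : ℝ) : EReal)) (𝓝[>] 0)
          = (0 : EReal)} = Set.Ioi (Real.logb 2 3) := by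
      ext q
      simp only [Set.mem_setOf_eq, Set.mem_Ioi]
      constructor
      · intro hq
        by_contra hle
        push_neg at hle
        have hev : ∀ᶠ t : ℝ in 𝓝[>] (0:ℝ),
            ((15/16) * gSG ^ (Real.logb 2 3 - 1) : ℝ) ≤ t ^ (q-1) * betaSG t := by
          filter_upwards [Ioo_mem_nhdsGT_of_mem
            (⟨le_refl (0:ℝ), lt_min gSG_pos one_pos⟩ : (0:ℝ) ∈ Set.Ico 0 (min gSG 1))]
            with t ht
          obtain ⟨ht0, htm⟩ := ht
          have h1 := (key t ⟨ht0, lt_of_lt_of_le htm (min_le_left _ _)⟩).1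
          have hsplit : t^(q-1) = t^(q - Real.logb 2 3) * t^(Real.logb 2 3 - 1) := by
            rw [← Real.rpow_add ht0]; ring_nf
          have hge1 : (1:ℝ) ≤ t^(q - Real.logb 2 3) := by
            calc (1:ℝ) = t^(0:ℝ) := (Real.rpow_zero t).symm
              _ ≤ t^(q - Real.logb 2 3) :=
                Real.rpow_le_rpow_of_exponent_ge ht0
                  (le_of_lt (lt_of_lt_of_le htm (min_le_right _ _))) (by linarith)
          have hb0 : 0 ≤ t^(Real.logb 2 3 - 1) * betaSG t := le_trans hc1pos.le h1
          calc (15/16) * gSG ^ (Real.logb 2 3 - 1)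
              ≤ t^(Real.logb 2 3 - 1) * betaSG t := h1
            _ = 1 * (t^(Real.logb 2 3 - 1) * betaSG t) := (one_mul _).symm
            _ ≤ t^(q - Real.logb 2 3) * (t^(Real.logb 2 3 - 1) * betaSG t) :=
                mul_le_mul_of_nonneg_right hge1 hb0
            _ = t^(q-1) * betaSG t := by rw [hsplit]; ring
        have hfreq : ∃ᶠ t : ℝ in 𝓝[>] (0:ℝ),
            (((15/16) * gSG ^ (Real.logb 2 3 - 1) : ℝ) : EReal)
              ≤ ((t ^ (q-1) * betaSG t : ℝ) : EReal) :=
          (hev.mono fun t h => EReal.coe_le_coe_iff.mpr h).frequently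
        have hle' := le_limsup_of_frequently_le' hfreq
        rw [hq] at hle'
        rw [show (0:EReal) = ((0:ℝ):EReal) by simp, EReal.coe_le_coe_iff] at hle'
        linarith
      · intro hq
        have hq' : 0 < q - Real.logb 2 3 := by linarith
        have htend : Filter.Tendsto (fun t : ℝ => t ^ (q - Real.logb 2 3)) (𝓝[>] 0) (𝓝 0) := by
          have hc : ContinuousAt (fun t : ℝ => t ^ (q - Real.logb 2 3)) 0 :=
            Real.continuousAt_rpow_const 0 _ (Or.inr hq'.le)
          have h : Filter.Tendsto (fun t : ℝ => t ^ (q - Real.logb 2 3)) (𝓝[>] 0)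
              (𝓝 ((0:ℝ) ^ (q - Real.logb 2 3))) :=
            hc.tendsto.mono_left nhdsWithin_le_nhds
          rwa [Real.zero_rpow (ne_of_gt hq')] at h
        have htend2 : Filter.Tendsto (fun t : ℝ => t ^ (q-1) * betaSG t) (𝓝[>] 0) (𝓝 0) := by
          apply squeeze_zero' ?_ ?_
            ((htend.const_mul ((3/2) * gSG ^ (1 - Real.logb 2 3))).congr' (by rfl)
              |>.mono_right (by rw [mul_zero]))
          · filter_upwards [Ioo_mem_nhdsGT_of_mem
              (⟨le_refl (0:ℝ), gSG_pos⟩ : (0:ℝ) ∈ Set.Ico 0 gSG)] with t ht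
            obtain ⟨ht0, htm⟩ := ht
            have h1 := (key t ⟨ht0, htm⟩).1
            have hsplit : t^(q-1) = t^(q - Real.logb 2 3) * t^(Real.logb 2 3 - 1) := by
              rw [← Real.rpow_add ht0]; ring_nf
            have hb0 : 0 ≤ t^(Real.logb 2 3 - 1) * betaSG t := le_trans hc1pos.le h1
            calc (0:ℝ) ≤ t^(q - Real.logb 2 3) * (t^(Real.logb 2 3 - 1) * betaSG t) :=
                  mul_nonneg (Real.rpow_nonneg ht0.le _) hb0
              _ = t^(q-1) * betaSG t := by rw [hsplit]; ring
          · filter_upwards [Ioo_mem_nhdsGT_of_mem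
              (⟨le_refl (0:ℝ), gSG_pos⟩ : (0:ℝ) ∈ Set.Ico 0 gSG)] with t ht
            obtain ⟨ht0, htm⟩ := ht
            have h2 := (key t ⟨ht0, htm⟩).2
            have hsplit : t^(q-1) = t^(q - Real.logb 2 3) * t^(Real.logb 2 3 - 1) := by
              rw [← Real.rpow_add ht0]; ring_nf
            calc t^(q-1) * betaSG t
                = t^(q - Real.logb 2 3) * (t^(Real.logb 2 3 - 1) * betaSG t) := by
                  rw [hsplit]; ring
              _ ≤ t^(q - Real.logb 2 3) * ((3/2) * gSG ^ (1 - Real.logb 2 3)) :=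
                  mul_le_mul_of_nonneg_left h2 (Real.rpow_nonneg ht0.le _)
              _ = (3/2) * gSG ^ (1 - Real.logb 2 3) * t^(q - Real.logb 2 3) := by ring
        have : Filter.Tendsto (fun t : ℝ => ((t ^ (q-1) * betaSG t : ℝ) : EReal)) (𝓝[>] 0)
            (𝓝 ((0:ℝ) : EReal)) := EReal.tendsto_coe.mpr htend2
        rw [show ((0:ℝ):EReal) = (0:EReal) by simp] at this
        exact this.limsup_eq
    rw [hS]
    exact csInf_Ioi
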